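/- Let f_{1,θ}(a) = i e^{iθ}(a-1)² ∫₀¹ √(t(1-t)) √(t(a-1)+2) dt on ℂ \ (-∞,-1]. Then a = 1 is the unique critical point of the harmonic function u(a) = Re f_{1,θ}(a) on the zero level set of u: there is no a ≠ 1 in ℂ \ (-∞,-1] with Re f_{1,θ}(a) = 0 and f'_{1,θ}(a) = 0. -/

import Mathlib

open Complex Set intervalIntegral

noncomputable section

/-- The ray `(-∞, -1]` viewed as a subset of `ℂ`. -/
def negRay : Set ℂ := {z : ℂ | z.im = 0 ∧ z.re ≤ -1}

/-- `f_{1,θ}(a) = i e^{iθ} (a-1)² ∫₀¹ √(t(1-t)) √(t(a-1)+2) dt` with principal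
square roots, well defined on `ℂ \ (-∞,-1]`. -/
def fOne (θ : ℝ) (a : ℂ) : ℂ :=
  Complex.I * Complex.exp (Complex.I * θ) * (a - 1) ^ 2 *
    ∫ t in (0:ℝ)..1, (Real.sqrt (t * (1 - t)) : ℂ) * (((t : ℂ) * (a - 1) + 2) ^ ((1:ℂ)/2))

section Aux

open Metric MeasureTheory

/-- auxiliary: the affine map `t ↦ t(a-1)+2`. -/
def zf (a : ℂ) (t : ℝ) : ℂ := (t:ℂ) * (a - 1) + 2
/-- auxiliary: its principal square root. -/
def uf (a : ℂ) (t : ℝ) : ℂ := zf a t ^ ((1:ℂ)/2)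
/-- auxiliary: the weight `√(t(1-t))`. -/
def sf (t : ℝ) : ℝ := Real.sqrt (t * (1 - t))
/-- auxiliary: the integral appearing in `fOne`. -/
def Ga (a : ℂ) : ℂ := ∫ t in (0:ℝ)..1, (sf t : ℂ) * uf a t
/-- auxiliary: derivative of `Ga`. -/
def Da (a : ℂ) : ℂ :=
  ∫ t in (0:ℝ)..1, (sf t : ℂ) * (((1:ℂ)/2) * zf a t ^ ((1:ℂ)/2 - 1) * (t:ℂ))
/-- auxiliary: normalized integrand of the derivative condition. -/
def qf (a : ℂ) (t : ℝ) : ℂ := (sf t : ℂ) * ((5:ℂ)/2 * uf a t - (uf a t)⁻¹)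
/-- auxiliary: real version of `qf` for real `a = r`. -/
def pR (r : ℝ) (t : ℝ) : ℝ :=
  sf t * ((5:ℝ)/2 * Real.sqrt (t*(r-1)+2) - (Real.sqrt (t*(r-1)+2))⁻¹)

lemma zf_im (a : ℂ) (t : ℝ) : (zf a t).im = t * a.im := by simp [zf]
lemma zf_re (a : ℂ) (t : ℝ) : (zf a t).re = t * (a.re - 1) + 2 := by simp [zf]

lemma mem_slit {a : ℂ} (ha : a ∈ negRayᶜ) {t : ℝ} (ht : t ∈ Icc (0:ℝ) 1) :
    zf a t ∈ slitPlane := by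
  rw [mem_slitPlane_iff]
  have ha' : ¬ (a.im = 0 ∧ a.re ≤ -1) := ha
  rcases eq_or_ne a.im 0 with him | him
  · left
    have hre : -1 < a.re := by
      by_contra h
      exact ha' ⟨him, le_of_not_gt h⟩
    rw [zf_re]
    nlinarith [ht.1, ht.2, mul_nonneg ht.1 (by linarith : (0:ℝ) ≤ a.re + 1)]
  · rcases eq_or_lt_of_le ht.1 with h0 | h0
    · left; rw [zf_re, ← h0]; norm_num
    · right; rw [zf_im]; exact mul_ne_zero (ne_of_gt h0) him

lemma zf_ne_zero {a : ℂ} (ha : a ∈ negRayᶜ) {t : ℝ} (ht : t ∈ Icc (0:ℝ) 1) :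
    zf a t ≠ 0 := slitPlane_ne_zero (mem_slit ha ht)

lemma uf_ne_zero {a : ℂ} (ha : a ∈ negRayᶜ) {t : ℝ} (ht : t ∈ Icc (0:ℝ) 1) :
    uf a t ≠ 0 := by
  rw [uf, Complex.cpow_def_of_ne_zero (zf_ne_zero ha ht)]
  exact Complex.exp_ne_zero _

lemma uf_sq {a : ℂ} (ha : a ∈ negRayᶜ) {t : ℝ} (ht : t ∈ Icc (0:ℝ) 1) :
    uf a t * uf a t = zf a t := by
  rw [uf, ← Complex.cpow_add _ _ (zf_ne_zero ha ht)]
  norm_num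

lemma im_cpow_half_pos {z : ℂ} (hz : 0 < z.im) : 0 < (z ^ ((1:ℂ)/2)).im := by
  have hz0 : z ≠ 0 := by intro h; rw [h] at hz; simp at hz
  rw [Complex.cpow_def_of_ne_zero hz0, Complex.exp_im]
  have harg : (Complex.log z * ((1:ℂ)/2)).im = z.arg / 2 := by
    simp [Complex.mul_im, Complex.log_im, Complex.log_re]
    ring
  rw [harg]
  have h1 : 0 < z.arg := by
    rcases lt_or_eq_of_le (Complex.arg_nonneg_iff.2 hz.le) with h | h
    · exact h
    · exfalso
      have := (Complex.arg_eq_zero_iff.1 h.symm).2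
      linarith
  have h2 : z.arg ≤ Real.pi := Complex.arg_le_pi z
  have : 0 < Real.sin (z.arg / 2) :=
    Real.sin_pos_of_pos_of_lt_pi (by linarith) (by linarith [Real.pi_pos])
  positivity

lemma im_cpow_half_neg {z : ℂ} (hz : z.im < 0) : (z ^ ((1:ℂ)/2)).im < 0 := by
  have hz0 : z ≠ 0 := by intro h; rw [h] at hz; simp at hz
  rw [Complex.cpow_def_of_ne_zero hz0, Complex.exp_im]
  have harg : (Complex.log z * ((1:ℂ)/2)).im = z.arg / 2 := by
    simp [Complex.mul_im, Complex.log_im, Complex.log_re]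
    ring
  rw [harg]
  have h1 : z.arg < 0 := by
    by_contra h
    exact absurd (Complex.arg_nonneg_iff.1 (le_of_not_gt h)) (not_le.2 hz)
  have h2 : -Real.pi < z.arg := Complex.neg_pi_lt_arg z
  have hs : Real.sin (z.arg / 2) < 0 := by
    have := Real.sin_pos_of_pos_of_lt_pi (x := -(z.arg/2)) (by linarith) (by linarith [Real.pi_pos])
    rw [Real.sin_neg] at this
    linarith
  have he : 0 < Real.exp (Complex.log z * ((1:ℂ)/2)).re := Real.exp_pos _
  nlinarith

lemma ofReal_cpow_half {x : ℝ} (hx : 0 < x) : (x:ℂ) ^ ((1:ℂ)/2) = (Real.sqrt x : ℂ) := by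
  rw [Real.sqrt_eq_rpow, Complex.ofReal_cpow hx.le (1/2)]
  norm_num

lemma zf_cont (a : ℂ) : Continuous (zf a) := by
  unfold zf; fun_prop

lemma sf_cont : Continuous (fun t => (sf t : ℂ)) := by
  unfold sf; fun_prop

lemma sf_mem {t : ℝ} (ht : t ∈ Icc (0:ℝ) 1) : 0 ≤ sf t ∧ sf t ≤ 1 := by
  constructor
  · exact Real.sqrt_nonneg _
  · have h : t * (1 - t) ≤ 1 := by nlinarith [ht.1, ht.2]
    calc sf t ≤ Real.sqrt 1 := Real.sqrt_le_sqrt h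
      _ = 1 := Real.sqrt_one

lemma uf_contOn {a : ℂ} (ha : a ∈ negRayᶜ) : ContinuousOn (uf a) (Icc 0 1) := by
  intro t ht
  exact (ContinuousAt.comp (continuousAt_cpow_const (mem_slit ha ht))
    (zf_cont a).continuousAt).continuousWithinAt

lemma intble_G {a : ℂ} (ha : a ∈ negRayᶜ) :
    IntervalIntegrable (fun t => (sf t : ℂ) * uf a t) volume 0 1 := by
  apply ContinuousOn.intervalIntegrable
  rw [uIcc_of_le (by norm_num : (0:ℝ) ≤ 1)]
  exact (sf_cont.continuousOn).mul (uf_contOn ha)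

lemma cont_D {a : ℂ} (ha : a ∈ negRayᶜ) : ContinuousOn
    (fun t => (sf t : ℂ) * (((1:ℂ)/2) * zf a t ^ ((1:ℂ)/2 - 1) * (t:ℂ))) (Icc 0 1) := by
  apply sf_cont.continuousOn.mul
  have hcp : ContinuousOn (fun t => zf a t ^ ((1:ℂ)/2 - 1)) (Icc 0 1) := by
    intro t ht
    exact (ContinuousAt.comp (continuousAt_cpow_const (mem_slit ha ht))
      (zf_cont a).continuousAt).continuousWithinAt
  exact (continuousOn_const.mul hcp).mul (by fun_prop)

lemma intble_D {a : ℂ} (ha : a ∈ negRayᶜ) : IntervalIntegrable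
    (fun t => (sf t : ℂ) * (((1:ℂ)/2) * zf a t ^ ((1:ℂ)/2 - 1) * (t:ℂ))) volume 0 1 := by
  apply ContinuousOn.intervalIntegrable
  rw [uIcc_of_le (by norm_num : (0:ℝ) ≤ 1)]
  exact cont_D ha

lemma cont_q {a : ℂ} (ha : a ∈ negRayᶜ) : ContinuousOn (qf a) (Icc 0 1) := by
  apply sf_cont.continuousOn.mul
  exact (continuousOn_const.mul (uf_contOn ha)).sub
    ((uf_contOn ha).inv₀ (fun t ht => uf_ne_zero ha ht))

lemma intble_q {a : ℂ} (ha : a ∈ negRayᶜ) :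
    IntervalIntegrable (qf a) volume 0 1 := by
  apply ContinuousOn.intervalIntegrable
  rw [uIcc_of_le (by norm_num : (0:ℝ) ≤ 1)]
  exact cont_q ha

lemma intInt_im {f : ℝ → ℂ} (hf : IntervalIntegrable f volume 0 1) :
    (∫ t in (0:ℝ)..1, f t).im = ∫ t in (0:ℝ)..1, (f t).im := by
  rw [intervalIntegral.integral_of_le zero_le_one, intervalIntegral.integral_of_le zero_le_one]
  exact (_root_.integral_im hf.1).symm

lemma intInt_re {f : ℝ → ℂ} (hf : IntervalIntegrable f volume 0 1) :
    (∫ t in (0:ℝ)..1, f t).re = ∫ t in (0:ℝ)..1, (f t).re := by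
  rw [intervalIntegral.integral_of_le zero_le_one, intervalIntegral.integral_of_le zero_le_one]
  exact (_root_.integral_re hf.1).symm

lemma hasDerivAt_G {a : ℂ} (ha : a ∈ negRayᶜ) :
    HasDerivAt (fun x => ∫ t in (0:ℝ)..1, (sf t : ℂ) * uf x t) (Da a) a := by
  have hne : (slitPlaneᶜ : Set ℂ).Nonempty := ⟨0, by simp [mem_slitPlane_iff]⟩
  have hcl : IsClosed (slitPlaneᶜ : Set ℂ) := Complex.isOpen_slitPlane.isClosed_compl
  set g : ℝ → ℝ := fun t => infDist (zf a t) slitPlaneᶜ with hg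
  have hgc : ContinuousOn g (Icc 0 1) :=
    ((continuous_infDist_pt _).comp (zf_cont a)).continuousOn
  have hgpos : ∀ t ∈ Icc (0:ℝ) 1, 0 < g t := by
    intro t ht
    exact (hcl.notMem_iff_infDist_pos hne).1 (by simpa using mem_slit ha ht)
  obtain ⟨t₀, ht₀, hmin⟩ := isCompact_Icc.exists_isMinOn ⟨0, by norm_num⟩ hgc
  set δ := g t₀ with hδdef
  have hδ : 0 < δ := hgpos t₀ ht₀
  have hδle : ∀ t ∈ Icc (0:ℝ) 1, δ ≤ g t := fun t ht => hmin ht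
  have key : ∀ x ∈ ball a (δ/2), ∀ t ∈ Icc (0:ℝ) 1,
      zf x t ∈ slitPlane ∧ δ/2 ≤ ‖zf x t‖ := by
    intro x hx t ht
    have hd : dist (zf x t) (zf a t) < δ/2 := by
      have : zf x t - zf a t = (t:ℂ) * (x - a) := by rw [zf, zf]; ring
      rw [dist_eq, this]
      calc ‖(t:ℂ) * (x - a)‖ = |t| * ‖x - a‖ := by
            rw [norm_mul, Complex.norm_real, Real.norm_eq_abs]
        _ ≤ 1 * ‖x - a‖ := by
            apply mul_le_mul_of_nonneg_right _ (norm_nonneg _)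
            rw [abs_le]; constructor <;> [linarith [ht.1]; exact ht.2]
        _ < δ/2 := by rw [one_mul, ← Complex.dist_eq]; exact mem_ball.1 hx
    constructor
    · by_contra hc
      have : g t ≤ dist (zf a t) (zf x t) := infDist_le_dist_of_mem (by simpa using hc)
      rw [dist_comm] at this
      have := hδle t ht
      linarith
    · have h0 : g t ≤ ‖zf a t‖ := by
        have : g t ≤ dist (zf a t) 0 := infDist_le_dist_of_mem (by simp [mem_slitPlane_iff])
        simpa using this
      have htri : ‖zf a t‖ - ‖zf x t‖ ≤ δ/2 := by
        have h' := norm_sub_norm_le (zf a t) (zf x t)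
        rw [← Complex.dist_eq, dist_comm] at h'
        linarith
      have := hδle t ht
      linarith
  have h01 : Set.uIoc (0:ℝ) 1 = Ioc 0 1 := uIoc_of_le (by norm_num)
  have hsub : Set.uIoc (0:ℝ) 1 ⊆ Icc 0 1 := by rw [h01]; exact Ioc_subset_Icc_self
  have contF : ∀ x ∈ ball a (δ/2), ContinuousOn (fun t => (sf t : ℂ) * uf x t) (Icc 0 1) := by
    intro x hx
    apply sf_cont.continuousOn.mul
    intro t ht
    exact (ContinuousAt.comp (continuousAt_cpow_const ((key x hx t ht).1))
      (zf_cont x).continuousAt).continuousWithinAt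
  have contF' : ContinuousOn
      (fun t => (sf t : ℂ) * (((1:ℂ)/2) * zf a t ^ ((1:ℂ)/2 - 1) * (t:ℂ))) (Icc 0 1) :=
    cont_D ha
  have haball : a ∈ ball a (δ/2) := mem_ball_self (by linarith)
  have main := intervalIntegral.hasDerivAt_integral_of_dominated_loc_of_deriv_le
    (F := fun x t => (sf t : ℂ) * uf x t)
    (F' := fun x t => (sf t : ℂ) * (((1:ℂ)/2) * zf x t ^ ((1:ℂ)/2 - 1) * (t:ℂ)))
    (x₀ := a) (a := (0:ℝ)) (b := 1) (μ := volume)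
    (bound := fun _ => (1:ℝ)/2 * (δ/2) ^ (-(1/2) : ℝ))
    (ball_mem_nhds a (by linarith : (0:ℝ) < δ/2))
    ?_ ?_ ?_ ?_ ?_ ?_
  · exact main.2
  · filter_upwards [ball_mem_nhds a (by linarith : (0:ℝ) < δ/2)] with x hx
    exact (((contF x hx).mono hsub).aestronglyMeasurable (by rw [h01]; exact measurableSet_Ioc))
  · apply ContinuousOn.intervalIntegrable
    rw [uIcc_of_le (by norm_num : (0:ℝ) ≤ 1)]
    exact contF a haball
  · exact (((contF'.mono hsub)).aestronglyMeasurable (by rw [h01]; exact measurableSet_Ioc))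
  · apply MeasureTheory.ae_of_all
    intro t ht x hx
    have ht' : t ∈ Icc (0:ℝ) 1 := hsub ht
    obtain ⟨hslit, habs⟩ := key x hx t ht'
    have hz0 : zf x t ≠ 0 := slitPlane_ne_zero hslit
    rw [norm_mul, norm_mul, norm_mul]
    have h1 : ‖(sf t : ℂ)‖ ≤ 1 := by
      rw [Complex.norm_real, Real.norm_eq_abs, _root_.abs_of_nonneg (sf_mem ht').1]
      exact (sf_mem ht').2
    have h2 : ‖((1:ℂ)/2)‖ = 1/2 := by norm_num
    have h3 : ‖zf x t ^ ((1:ℂ)/2 - 1)‖ ≤ (δ/2) ^ (-(1/2) : ℝ) := by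
      rw [Complex.norm_cpow_of_ne_zero hz0]
      have : (((1:ℂ)/2 - 1)).re = -(1/2) := by norm_num [Complex.sub_re]
      rw [this, show (((1:ℂ)/2 - 1)).im = 0 by norm_num [Complex.sub_im]]
      simp only [mul_zero, Real.exp_zero, div_one]
      exact Real.rpow_le_rpow_of_nonpos (by linarith) habs (by norm_num)
    have h4 : ‖(t:ℂ)‖ ≤ 1 := by
      rw [Complex.norm_real, Real.norm_eq_abs, _root_.abs_of_nonneg (ht'.1)]
      exact ht'.2
    have hb : (0:ℝ) ≤ (δ/2) ^ (-(1/2) : ℝ) := Real.rpow_nonneg (by linarith) _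
    calc ‖(sf t : ℂ)‖ * (‖((1:ℂ)/2)‖ * ‖zf x t ^ ((1:ℂ)/2 - 1)‖ * ‖(t:ℂ)‖)
        ≤ 1 * (1/2 * ((δ/2) ^ (-(1/2) : ℝ)) * 1) := by
          apply mul_le_mul h1 _ (by positivity) (by norm_num)
          rw [h2]
          apply mul_le_mul _ h4 (norm_nonneg _) (by positivity)
          exact mul_le_mul_of_nonneg_left h3 (by norm_num)
      _ = 1/2 * (δ/2) ^ (-(1/2) : ℝ) := by ring
  · apply intervalIntegrable_const
  · apply MeasureTheory.ae_of_all
    intro t ht x hx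
    have ht' : t ∈ Icc (0:ℝ) 1 := hsub ht
    have hz : HasDerivAt (fun x => zf x t) (t:ℂ) x := by
      have h := (((hasDerivAt_id x).sub_const 1).const_mul (t:ℂ)).add_const 2
      simpa [zf] using h
    have := (hz.cpow_const (c := (1:ℂ)/2) (key x hx t ht').1).const_mul (sf t : ℂ)
    simpa [uf, mul_comm, mul_assoc, mul_left_comm] using this

lemma hasDerivAt_fOne (θ : ℝ) {a : ℂ} (ha : a ∈ negRayᶜ) :
    HasDerivAt (fOne θ)
      (Complex.I * Complex.exp (Complex.I * θ) *
        (2 * (a - 1) * Ga a + (a - 1) ^ 2 * Da a)) a := by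
  have h1 : HasDerivAt (fun x : ℂ => (x - 1) ^ 2) (2 * (a - 1)) a := by
    have := ((hasDerivAt_id a).sub_const 1).pow 2
    simp at this
    exact this
  have hmul := h1.mul (hasDerivAt_G ha)
  have hfin := hmul.const_mul (Complex.I * Complex.exp (Complex.I * θ))
  have hfe : fOne θ = fun x => Complex.I * Complex.exp (Complex.I * θ) *
      ((x - 1) ^ 2 * ∫ t in (0:ℝ)..1, (sf t : ℂ) * uf x t) := by
    funext x
    simp only [fOne, sf, uf, zf]
    ring
  rw [hfe]
  exact hfin

lemma T_eq {a : ℂ} (ha : a ∈ negRayᶜ) :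
    2 * Ga a + (a - 1) * Da a = ∫ t in (0:ℝ)..1, qf a t := by
  rw [Ga, Da, ← intervalIntegral.integral_const_mul, ← intervalIntegral.integral_const_mul,
    ← intervalIntegral.integral_add ((intble_G ha).const_mul 2) ((intble_D ha).const_mul (a-1))]
  apply intervalIntegral.integral_congr
  intro t ht
  rw [uIcc_of_le (by norm_num : (0:ℝ) ≤ 1)] at ht
  have hu : uf a t ≠ 0 := uf_ne_zero ha ht
  have huu : uf a t * uf a t = (t:ℂ) * (a - 1) + 2 := by rw [uf_sq ha ht]; rfl
  have hexp : zf a t ^ ((1:ℂ)/2 - 1) = (uf a t)⁻¹ := by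
    rw [show ((1:ℂ)/2 - 1) = -((1:ℂ)/2) by norm_num, Complex.cpow_neg]
    rfl
  simp only [qf, hexp]
  have h2 : (t:ℂ) * (a-1) = uf a t * uf a t - 2 := by rw [huu]; ring
  field_simp
  linear_combination (sf t : ℂ) * h2

lemma pR_contOn {r : ℝ} (hr : -1 < r) : ContinuousOn (pR r) (Icc 0 1) := by
  have hz : ∀ t ∈ Icc (0:ℝ) 1, 0 < t*(r-1)+2 := by
    intro t ht
    nlinarith [ht.1, ht.2, mul_nonneg ht.1 (by linarith : (0:ℝ) ≤ r + 1)]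
  apply ContinuousOn.mul (by unfold sf; fun_prop)
  apply ContinuousOn.sub (by fun_prop)
  apply ContinuousOn.inv₀ (by fun_prop)
  intro t ht
  exact ne_of_gt (Real.sqrt_pos.2 (hz t ht))

lemma pR_intble {r : ℝ} (hr : -1 < r) {c d : ℝ} (hc : c ∈ Icc (0:ℝ) 1) (hd : d ∈ Icc (0:ℝ) 1) :
    IntervalIntegrable (pR r) volume c d := by
  apply ContinuousOn.intervalIntegrable
  apply (pR_contOn hr).mono
  intro x hx
  rcases le_total c d with h | h
  · rw [uIcc_of_le h] at hx
    exact ⟨le_trans hc.1 hx.1, le_trans hx.2 hd.2⟩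
  · rw [uIcc_of_ge h] at hx
    exact ⟨le_trans hd.1 hx.1, le_trans hx.2 hc.2⟩

lemma pR_term_pos {x : ℝ} (hx : 2/5 < x) : 0 < (5:ℝ)/2 * Real.sqrt x - (Real.sqrt x)⁻¹ := by
  set v := Real.sqrt x with hv
  have hv0 : 0 < v := Real.sqrt_pos.2 (by linarith)
  have hvv : v * v = x := Real.mul_self_sqrt (by linarith)
  have hiv : v⁻¹ * v = 1 := inv_mul_cancel₀ (ne_of_gt hv0)
  nlinarith [hvv, hiv, hv0, mul_pos hv0 hv0]

lemma pR_term_nonneg {x : ℝ} (hx25 : 2/5 ≤ x) : 0 ≤ (5:ℝ)/2 * Real.sqrt x - (Real.sqrt x)⁻¹ := by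
  set v := Real.sqrt x with hv
  have hv0 : 0 < v := Real.sqrt_pos.2 (by linarith)
  have hvv : v * v = x := Real.mul_self_sqrt (by linarith)
  have hiv : v⁻¹ * v = 1 := inv_mul_cancel₀ (ne_of_gt hv0)
  nlinarith [hvv, hiv, hv0, mul_pos hv0 hv0]

lemma b4_pointwise {t w s v : ℝ} (ht : t ∈ Icc (4/5:ℝ) 1) (hw2 : -2 < w) (hw0 : w < 0)
    (hs0 : 0 ≤ s) (hss : s*s = t*(1-t)) (hv0 : 0 < v) (hvv : v*v = t*w+2) :
    (3:ℝ)/8*(8-10*t) ≤ s * ((5:ℝ)/2*v - v⁻¹) := by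
  have ht0 : (0:ℝ) ≤ t := by linarith [ht.1]
  have hv2 : v * v ≤ 2 := by nlinarith [mul_nonneg ht0 (by linarith : (0:ℝ) ≤ -w)]
  have hv2t : 2 - 2*t ≤ v*v := by nlinarith [mul_nonneg ht0 (by linarith : (0:ℝ) ≤ w + 2)]
  have hA : 8 - 10*t ≤ 5*(v*v) - 2 := by nlinarith [mul_nonneg ht0 (by linarith : (0:ℝ) ≤ w + 2)]
  have hexp : (5:ℝ)/2 * v - v⁻¹ = (5*(v*v) - 2)/(2*v) := by field_simp
  rw [hexp]
  rcases le_or_gt 0 (5*(v*v) - 2) with h5 | h5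
  · have hpos : 0 ≤ s * ((5*(v*v) - 2)/(2*v)) := by positivity
    nlinarith [ht.1]
  · have h4s : 4*s ≤ 3*v := by
      nlinarith [hss, hv2t, hs0, hv0, ht.1, ht.2, sq_nonneg (3*v - 4*s)]
    have hsdiv : s/(2*v) ≤ 3/8 := by
      rw [div_le_iff₀ (by positivity)]
      linarith
    calc (3:ℝ)/8*(8-10*t) ≤ 3/8*(5*(v*v)-2) := by linarith
      _ ≤ (s/(2*v))*(5*(v*v)-2) := mul_le_mul_of_nonpos_right hsdiv h5.le
      _ = s*((5*(v*v)-2)/(2*v)) := by ring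

lemma pR_int_pos {r : ℝ} (hr : -1 < r) : 0 < ∫ t in (0:ℝ)..1, pR r t := by
  have hzpos : ∀ t ∈ Icc (0:ℝ) 1, 0 < t*(r-1)+2 := by
    intro t ht
    nlinarith [ht.1, ht.2, mul_nonneg ht.1 (by linarith : (0:ℝ) ≤ r + 1)]
  rcases le_or_gt (-8/5 : ℝ) (r - 1) with hw | hw
  · -- pointwise positive on (0,1)
    apply intervalIntegral_pos_of_pos_on (pR_intble hr ⟨le_refl 0, by norm_num⟩
      ⟨by norm_num, le_refl 1⟩) _ one_pos
    intro t ht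
    have hzt : (2:ℝ)/5 < t*(r-1)+2 := by
      rcases le_or_gt 0 (r-1) with h | h
      · nlinarith [ht.1, ht.2, mul_nonneg ht.1.le h]
      · nlinarith [ht.1, ht.2, mul_lt_mul_of_neg_right ht.2 h]
    have hsf : 0 < sf t := Real.sqrt_pos.2 (by nlinarith [ht.1, ht.2])
    exact mul_pos hsf (pR_term_pos hzt)
  · -- split the integral into four pieces
    have hw2 : -2 < r - 1 := by linarith
    have i1 : IntervalIntegrable (pR r) volume 0 (1/4) :=
      pR_intble hr ⟨le_refl 0, zero_le_one⟩ ⟨by norm_num, by norm_num⟩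
    have i2 : IntervalIntegrable (pR r) volume (1/4) (1/2) :=
      pR_intble hr ⟨by norm_num, by norm_num⟩ ⟨by norm_num, by norm_num⟩
    have i3 : IntervalIntegrable (pR r) volume (1/2) (4/5) :=
      pR_intble hr ⟨by norm_num, by norm_num⟩ ⟨by norm_num, by norm_num⟩
    have i4 : IntervalIntegrable (pR r) volume (4/5) 1 :=
      pR_intble hr ⟨by norm_num, by norm_num⟩ ⟨zero_le_one, le_refl 1⟩
    have hs1 := intervalIntegral.integral_add_adjacent_intervals i1 i2
    have hs2 := intervalIntegral.integral_add_adjacent_intervals (i1.trans i2) i3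
    have hs3 := intervalIntegral.integral_add_adjacent_intervals ((i1.trans i2).trans i3) i4
    -- piecewise bounds
    have b1 : 0 ≤ ∫ t in (0:ℝ)..(1/4), pR r t := by
      apply intervalIntegral.integral_nonneg (by norm_num)
      intro t ht
      have hzt : (2:ℝ)/5 ≤ t*(r-1)+2 := by
        nlinarith [ht.1, ht.2, mul_le_mul_of_nonpos_right ht.2 (le_of_lt (by linarith : r - 1 < 0))]
      exact mul_nonneg (Real.sqrt_nonneg _) (pR_term_nonneg hzt)
    have b3 : 0 ≤ ∫ t in (1/2:ℝ)..(4/5), pR r t := by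
      apply intervalIntegral.integral_nonneg (by norm_num)
      intro t ht
      have hzt : (2:ℝ)/5 ≤ t*(r-1)+2 := by
        nlinarith [ht.1, ht.2, mul_le_mul_of_nonpos_right ht.2 (le_of_lt (by linarith : r - 1 < 0))]
      exact mul_nonneg (Real.sqrt_nonneg _) (pR_term_nonneg hzt)
    have b2 : (1:ℝ)/10 ≤ ∫ t in (1/4:ℝ)..(1/2), pR r t := by
      have hmono := intervalIntegral.integral_mono_on (f := fun _ => (2:ℝ)/5) (g := pR r)
        (by norm_num : (1/4:ℝ) ≤ 1/2) (intervalIntegrable_const) i2 ?_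
      · rw [intervalIntegral.integral_const] at hmono
        have : ((1:ℝ)/2 - 1/4) • ((2:ℝ)/5) = 1/10 := by norm_num
        linarith [hmono, this ▸ hmono]
      · intro t ht
        have hz1 : (1:ℝ) ≤ t*(r-1)+2 := by
          nlinarith [ht.1, ht.2, mul_le_mul_of_nonpos_right ht.2 (le_of_lt (by linarith : r - 1 < 0))]
        set v := Real.sqrt (t*(r-1)+2) with hv
        have hv1 : (1:ℝ) ≤ v := (Real.le_sqrt' one_pos).2 (by nlinarith)
        have hvinv : v⁻¹ ≤ 1 := inv_le_one_of_one_le₀ hv1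
        have hterm : (3:ℝ)/2 ≤ 5/2 * v - v⁻¹ := by nlinarith
        have hsf : (43:ℝ)/100 ≤ sf t := by
          rw [sf]
          rw [show (43:ℝ)/100 ≤ Real.sqrt (t*(1-t)) ↔ ((43:ℝ)/100)^2 ≤ t*(1-t) from
            Real.le_sqrt' (by norm_num)]
          nlinarith [ht.1, ht.2]
        calc (2:ℝ)/5 ≤ (43/100) * (3/2) := by norm_num
          _ ≤ sf t * (5/2 * v - v⁻¹) :=
              mul_le_mul hsf hterm (by norm_num) (by linarith)
          _ = pR r t := by rw [pR]
    have b4 : -(3:ℝ)/40 ≤ ∫ t in (4/5:ℝ)..1, pR r t := by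
      have hmono := intervalIntegral.integral_mono_on (f := fun t => (3:ℝ)/8*(8-10*t)) (g := pR r)
        (by norm_num : (4/5:ℝ) ≤ 1)
        ((intervalIntegrable_const.sub (intervalIntegrable_id.const_mul 10)).const_mul (3/8))
        i4 ?_
      · have hval : (∫ t in (4/5:ℝ)..1, (3:ℝ)/8*(8-10*t)) = -3/40 := by
          have h1 : (∫ t in (4/5:ℝ)..1, (3:ℝ)/8*(8-10*t))
              = (3:ℝ)/8 * ∫ t in (4/5:ℝ)..1, (8-10*t) := intervalIntegral.integral_const_mul _ _
          have h2 : (∫ t in (4/5:ℝ)..1, ((8:ℝ)-10*t))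
              = (∫ t in (4/5:ℝ)..1, (8:ℝ)) - ∫ t in (4/5:ℝ)..1, 10*t :=
            intervalIntegral.integral_sub intervalIntegrable_const
              (intervalIntegrable_id.const_mul 10)
          have h3 : (∫ t in (4/5:ℝ)..1, ((10:ℝ)*t)) = 10 * ∫ t in (4/5:ℝ)..1, t :=
            intervalIntegral.integral_const_mul _ _
          rw [h1, h2, h3, integral_id, intervalIntegral.integral_const]
          norm_num
        linarith [hval ▸ hmono]
      · intro t ht
        have ht01 : t ∈ Icc (0:ℝ) 1 := ⟨by linarith [ht.1], ht.2⟩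
        have hz0 : 0 < t*(r-1)+2 := hzpos t ht01
        have hb := b4_pointwise (w := r-1) (s := sf t) (v := Real.sqrt (t*(r-1)+2)) ht hw2
          (by linarith) (Real.sqrt_nonneg _)
          (Real.mul_self_sqrt (by nlinarith [ht.1, ht.2]))
          (Real.sqrt_pos.2 hz0) (Real.mul_self_sqrt hz0.le)
        calc (fun t => (3:ℝ)/8*(8-10*t)) t = (3:ℝ)/8*(8-10*t) := rfl
          _ ≤ sf t * ((5:ℝ)/2 * Real.sqrt (t*(r-1)+2) - (Real.sqrt (t*(r-1)+2))⁻¹) := hb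
          _ = pR r t := by rw [pR]
    linarith [hs1, hs2, hs3, b1, b2, b3, b4]

lemma qf_im {a : ℂ} (ha : a ∈ negRayᶜ) {t : ℝ} (ht : t ∈ Icc (0:ℝ) 1) :
    (qf a t).im = sf t * ((uf a t).im * (5/2 + (Complex.normSq (uf a t))⁻¹)) := by
  have h52 : ((5:ℂ)/2) = ((5/2 : ℝ) : ℂ) := by norm_num
  have hns : Complex.normSq (uf a t) ≠ 0 :=
    ne_of_gt (Complex.normSq_pos.2 (uf_ne_zero ha ht))
  rw [qf, h52]
  simp only [Complex.mul_im, Complex.sub_im, Complex.sub_re, Complex.mul_re,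
    Complex.ofReal_re, Complex.ofReal_im, Complex.inv_im, Complex.inv_re]
  field_simp
  ring

end Aux

/-- `a = 1` is the only critical point of `u = Re f_{1,θ}` on its zero level set:
there is no `a ≠ 1` in `ℂ \ (-∞,-1]` with `Re f_{1,θ}(a) = 0` and `f'_{1,θ}(a) = 0`. -/
theorem stmt8 (θ : ℝ) (hθ : θ ∈ Ico (0:ℝ) (Real.pi / 2)) :
    ∀ a ∈ negRayᶜ, a ≠ 1 → (fOne θ a).re = 0 → deriv (fOne θ) a ≠ 0 := by
  intro a ha hne hre hder
  have hC : Complex.I * Complex.exp (Complex.I * θ) ≠ 0 :=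
    mul_ne_zero Complex.I_ne_zero (Complex.exp_ne_zero _)
  have hw : a - 1 ≠ 0 := sub_ne_zero.2 hne
  have hD := hasDerivAt_fOne θ ha
  rw [hD.deriv] at hder
  have hT0 : 2 * Ga a + (a - 1) * Da a = 0 := by
    rcases mul_eq_zero.1 hder with h | h
    · exact absurd h hC
    · have h3 : (a - 1) * (2 * Ga a + (a - 1) * Da a) = 0 := by
        rw [show (a-1) * (2 * Ga a + (a-1) * Da a) = 2*(a-1)*Ga a + (a-1)^2 * Da a from by ring]
        exact h
      rcases mul_eq_zero.1 h3 with h4 | h4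
      · exact absurd h4 hw
      · exact h4
  rw [T_eq ha] at hT0
  rcases lt_trichotomy a.im 0 with him | him | him
  · -- imaginary part negative
    have hpos : 0 < ∫ t in (0:ℝ)..1, (-(qf a t).im) := by
      apply intervalIntegral_pos_of_pos_on
      · apply ContinuousOn.intervalIntegrable
        rw [uIcc_of_le (by norm_num : (0:ℝ) ≤ 1)]
        exact (Complex.continuous_im.comp_continuousOn (cont_q ha)).neg
      · intro t ht
        have ht' : t ∈ Icc (0:ℝ) 1 := ⟨ht.1.le, ht.2.le⟩
        have hzim : (zf a t).im < 0 := by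
          rw [zf_im]
          exact mul_neg_of_pos_of_neg ht.1 him
        have huim : (uf a t).im < 0 := im_cpow_half_neg hzim
        have hsf : 0 < sf t := Real.sqrt_pos.2 (by nlinarith [ht.1, ht.2])
        have hns : 0 < Complex.normSq (uf a t) := Complex.normSq_pos.2 (uf_ne_zero ha ht')
        rw [qf_im ha ht']
        have : 0 < (5:ℝ)/2 + (Complex.normSq (uf a t))⁻¹ := by positivity
        nlinarith [mul_pos hsf (mul_pos (neg_pos.2 huim) this)]
      · exact one_pos
    rw [intervalIntegral.integral_neg] at hpos
    have him0 := congrArg Complex.im hT0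
    rw [intInt_im (intble_q ha)] at him0
    simp only [Complex.zero_im] at him0
    linarith
  · -- real case
    have hr : -1 < a.re := by
      by_contra h
      exact ha ⟨him, le_of_not_gt h⟩
    set r := a.re with hrdef
    have haR : a = (r : ℂ) := by
      apply Complex.ext
      · simp [hrdef]
      · simp [him]
    have hre2 := congrArg Complex.re hT0
    rw [intInt_re (intble_q ha)] at hre2
    simp only [Complex.zero_re] at hre2
    have hcongr : (∫ t in (0:ℝ)..1, (qf a t).re) = ∫ t in (0:ℝ)..1, pR r t := by
      apply intervalIntegral.integral_congr
      intro t ht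
      rw [uIcc_of_le (by norm_num : (0:ℝ) ≤ 1)] at ht
      have hzp : 0 < t*(r-1)+2 := by
        nlinarith [ht.1, ht.2, mul_nonneg ht.1 (by linarith : (0:ℝ) ≤ r + 1)]
      have hzr : zf a t = ((t*(r-1)+2 : ℝ) : ℂ) := by
        rw [haR, zf]; push_cast; ring
      show (qf a t).re = pR r t
      have hqq : qf a t = ((pR r t : ℝ) : ℂ) := by
        rw [qf, uf, hzr, ofReal_cpow_half hzp, pR, sf]
        push_cast
        ring
      rw [hqq, Complex.ofReal_re]
    rw [hcongr] at hre2
    have := pR_int_pos hr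
    linarith
  · -- imaginary part positive
    have hpos : 0 < ∫ t in (0:ℝ)..1, (qf a t).im := by
      apply intervalIntegral_pos_of_pos_on
      · apply ContinuousOn.intervalIntegrable
        rw [uIcc_of_le (by norm_num : (0:ℝ) ≤ 1)]
        exact Complex.continuous_im.comp_continuousOn (cont_q ha)
      · intro t ht
        have ht' : t ∈ Icc (0:ℝ) 1 := ⟨ht.1.le, ht.2.le⟩
        have hzim : 0 < (zf a t).im := by
          rw [zf_im]
          exact mul_pos ht.1 him
        have huim : 0 < (uf a t).im := im_cpow_half_pos hzim
        have hsf : 0 < sf t := Real.sqrt_pos.2 (by nlinarith [ht.1, ht.2])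
        have hns : 0 < Complex.normSq (uf a t) := Complex.normSq_pos.2 (uf_ne_zero ha ht')
        rw [qf_im ha ht']
        have : 0 < (5:ℝ)/2 + (Complex.normSq (uf a t))⁻¹ := by positivity
        nlinarith [mul_pos hsf (mul_pos huim this)]
      · exact one_pos
    have him0 := congrArg Complex.im hT0
    rw [intInt_im (intble_q ha)] at him0
    simp only [Complex.zero_im] at him0
    linarith
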